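/- The derivative of a Blaschke product of degree d has no zeros on the unit circle. -/

import Mathlib

open Complex Finset

theorem blaschke_deriv_ne_zero_on_circle (d : ℕ) (hd : 1 ≤ d) (θ : ℝ) (a : Fin d → ℂ)
    (ha : ∀ k, ‖a k‖ < 1)
    (B : ℂ → ℂ)
    (hB : ∀ z, B z = Complex.exp (θ * Complex.I) *
      ∏ k, (z - a k) / (1 - (starRingEnd ℂ) (a k) * z))
    (z : ℂ) (hz : ‖z‖ = 1) :
    deriv B z ≠ 0 := by
  classical
  have hzz : z * (starRingEnd ℂ) z = 1 := by
    rw [Complex.mul_conj]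
    norm_cast
    simp [Complex.normSq_eq_norm_sq, hz]
  have hz0 : z ≠ 0 := by
    intro h; rw [h] at hz; simp at hz
  -- the factors
  set b : Fin d → ℂ → ℂ := fun k w => (w - a k) / (1 - (starRingEnd ℂ) (a k) * w) with hbdef
  have hnum : ∀ k, z - a k ≠ 0 := by
    intro k h
    have : z = a k := by linear_combination h
    rw [this] at hz
    exact absurd hz (ne_of_lt (ha k))
  have hden : ∀ k, 1 - (starRingEnd ℂ) (a k) * z ≠ 0 := by
    intro k h
    have h1 : (starRingEnd ℂ) (a k) * z = 1 := by linear_combination -h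
    have := congrArg norm h1
    rw [norm_mul, hz, mul_one, Complex.norm_conj, norm_one] at this
    exact absurd this (ne_of_lt (ha k))
  have hiden : ∀ k, 1 - (starRingEnd ℂ) (a k) * z = z * (starRingEnd ℂ) (z - a k) := by
    intro k
    rw [map_sub, mul_sub, hzz]; ring
  -- derivative of each factor
  set c : Fin d → ℂ := fun k =>
    (1 - (starRingEnd ℂ) (a k) * a k) / (1 - (starRingEnd ℂ) (a k) * z) ^ 2 with hcdef
  have hderiv : ∀ k, HasDerivAt (b k) (c k) z := by
    intro k
    have h1 : HasDerivAt (fun w => w - a k) 1 z := (hasDerivAt_id z).sub_const _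
    have h2 : HasDerivAt (fun w => 1 - (starRingEnd ℂ) (a k) * w) (-((starRingEnd ℂ) (a k))) z := by
      simpa using (((hasDerivAt_id z).const_mul ((starRingEnd ℂ) (a k)))).const_sub 1
    have := h1.div h2 (hden k)
    refine this.congr_deriv ?_
    rw [hcdef]
    field_simp
    ring
  set S : ℂ := ∑ k, (∏ j ∈ Finset.univ.erase k, b j z) • c k with hSdef
  have hf : HasDerivAt (fun w => ∏ k, b k w) S z :=
    HasDerivAt.fun_finsetProd (fun k _ => hderiv k)
  have hBeq : B = fun w => Complex.exp (θ * Complex.I) * ∏ k, b k w := funext hB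
  have hBd : HasDerivAt B (Complex.exp (θ * Complex.I) * S) z := by
    rw [hBeq]; exact hf.const_mul _
  rw [hBd.deriv]
  -- unimodularity of factors on the circle
  have hunit : ∀ k, b k z * (starRingEnd ℂ) (b k z) = 1 := by
    intro k
    rw [Complex.mul_conj]
    have : Complex.normSq (b k z) = 1 := by
      simp only [hbdef, Complex.normSq_div, hiden k, Complex.normSq_mul,
        Complex.normSq_conj]
      have hz2 : Complex.normSq z = 1 := by
        rw [Complex.normSq_eq_norm_sq, hz]; norm_num
      rw [hz2, one_mul, div_self]
      exact (Complex.normSq_pos.mpr (hnum k)).ne'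
    rw [this]; norm_num
  -- key positivity computation
  set r : Fin d → ℝ := fun k => (1 - Complex.normSq (a k)) / Complex.normSq (z - a k) with hrdef
  have hterm : ∀ k, z * ((∏ j ∈ Finset.univ.erase k, b j z) • c k)
      * (starRingEnd ℂ) (∏ j, b j z) = (r k : ℂ) := by
    intro k
    have hconjprod : (∏ j ∈ Finset.univ.erase k, b j z) * (starRingEnd ℂ) (∏ j, b j z)
        = (starRingEnd ℂ) (b k z) := by
      rw [map_prod, ← Finset.mul_prod_erase _ _ (Finset.mem_univ k)]
      rw [mul_comm ((starRingEnd ℂ) (b k z)), ← mul_assoc, ← Finset.prod_mul_distrib]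
      rw [Finset.prod_congr rfl (fun j _ => hunit j), Finset.prod_const_one, one_mul]
    have hcz : (starRingEnd ℂ) z ≠ 0 := by simpa using hz0
    have hc : (starRingEnd ℂ) (z - a k) ≠ 0 := (map_ne_zero (starRingEnd ℂ)).mpr (hnum k)
    have hconjb : (starRingEnd ℂ) (b k z) = (1 - (starRingEnd ℂ) (a k) * z) / (z - a k) := by
      rw [hbdef]
      simp only
      rw [map_div₀, hiden k, map_mul, Complex.conj_conj]
      rw [div_eq_div_iff (mul_ne_zero hcz (hnum k)) (hnum k)]
      linear_combination (-(starRingEnd ℂ) (z - a k) * (z - a k)) * hzz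
    have : z * ((∏ j ∈ Finset.univ.erase k, b j z) • c k) * (starRingEnd ℂ) (∏ j, b j z)
        = z * c k * ((∏ j ∈ Finset.univ.erase k, b j z) * (starRingEnd ℂ) (∏ j, b j z)) := by
      rw [smul_eq_mul]; ring
    rw [this, hconjprod, hconjb, hcdef, hrdef]
    have e1 : ((Complex.normSq (z - a k) : ℝ) : ℂ) = (z - a k) * (starRingEnd ℂ) (z - a k) :=
      (Complex.mul_conj _).symm
    have e2 : ((Complex.normSq (a k) : ℝ) : ℂ) = (a k) * (starRingEnd ℂ) (a k) :=
      (Complex.mul_conj _).symm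
    push_cast
    rw [e1, e2]
    rw [hiden k]
    rw [← mul_div_assoc, ← mul_div_assoc, div_mul_eq_mul_div, div_div,
      div_eq_div_iff (mul_ne_zero (pow_ne_zero _ (mul_ne_zero hz0 hc)) (hnum k))
        (mul_ne_zero (hnum k) hc)]
    ring
  have hsum : z * S * (starRingEnd ℂ) (∏ j, b j z) = ((∑ k, r k : ℝ) : ℂ) := by
    rw [hSdef, Finset.mul_sum, Finset.sum_mul]
    push_cast
    exact Finset.sum_congr rfl fun k _ => hterm k
  have hrpos : ∀ k, 0 < r k := by
    intro k
    apply div_pos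
    · have : Complex.normSq (a k) < 1 := by
        rw [Complex.normSq_eq_norm_sq]
        calc ‖a k‖ ^ 2 < 1 ^ 2 := by
              apply pow_lt_pow_left₀ (ha k) (norm_nonneg _)
              norm_num
          _ = 1 := one_pow 2
      linarith
    · exact Complex.normSq_pos.mpr (hnum k)
  have hsumpos : 0 < ∑ k, r k := by
    apply Finset.sum_pos (fun k _ => hrpos k)
    have : Nonempty (Fin d) := Fin.pos_iff_nonempty.mp hd
    exact Finset.univ_nonempty
  have hS : S ≠ 0 := by
    intro h0
    rw [h0, mul_zero, zero_mul] at hsum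
    have : (0:ℝ) = ∑ k, r k := by exact_mod_cast hsum
    linarith
  exact mul_ne_zero (Complex.exp_ne_zero _) hS
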